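/- Let (Γ⁰, Σ⁰) be an instance of Exact Cover by 3-Sets with |Γ⁰| = 3ν'. Construct (Γ, Σ) as follows: add three new elements h₁, h₂, h₃ to the ground set and the set {h₁, h₂, h₃} to the collection; add 3(ν'+2) further new elements x_i, y_i, z_i for i = 1,…,ν'+2, together with the sets S_i = {x_i, y_i, z_i} for i = 1,…,ν'+2, the sets S'_i = {y_i, z_i, x_{i+1}} for i = 1,…,ν'+1, and S'_{ν'+2} = {y_{ν'+2}, z_{ν'+2}, x_1}. Then (Γ, Σ) has an exact cover if and only if (Γ⁰, Σ⁰) has an exact cover. -/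

import Mathlib

open scoped Classical

namespace Paper

variable {α : Type*} [DecidableEq α]

/-- `(Γ, Sig)` admits an exact cover: a subcollection of `Sig` of `|Γ|/3` sets whose union
is `Γ` (the sets in any X3C instance have three elements each, so such a subcollection
necessarily consists of pairwise disjoint sets covering `Γ`). -/
def HasExactCover (Γ : Finset α) (Sig : Finset (Finset α)) : Prop :=
  ∃ T ⊆ Sig, 3 * T.card = Γ.card ∧ T.biUnion id = Γ

section Construction

variable (ν' : ℕ) (e : Fin 3 ⊕ (Fin (ν' + 2) × Fin 3) → α)

/-- The new elements added to the ground set: `h₁, h₂, h₃` (images of `Sum.inl`) and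
`x_i, y_i, z_i` for `i = 1, …, ν'+2` (images of `Sum.inr (i, 0)`, `Sum.inr (i, 1)`,
`Sum.inr (i, 2)` respectively). -/
def newElems : Finset α := Finset.univ.image e

/-- The added set `{h₁, h₂, h₃}`. -/
def hTriple : Finset α := {e (Sum.inl 0), e (Sum.inl 1), e (Sum.inl 2)}

/-- The added set `S_i = {x_i, y_i, z_i}`. -/
def Sset (i : Fin (ν' + 2)) : Finset α :=
  {e (Sum.inr (i, 0)), e (Sum.inr (i, 1)), e (Sum.inr (i, 2))}

/-- The added set `S'_i = {y_i, z_i, x_{i+1}}` (indices cyclic, so that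
`S'_{ν'+2} = {y_{ν'+2}, z_{ν'+2}, x_1}`). -/
def S'set (i : Fin (ν' + 2)) : Finset α :=
  {e (Sum.inr (i, 1)), e (Sum.inr (i, 2)), e (Sum.inr (i + 1, 0))}

/-- The collection `Σ` of the modified instance. -/
def bigSigma (Sig0 : Finset (Finset α)) : Finset (Finset α) :=
  Sig0 ∪ {hTriple ν' e} ∪ Finset.univ.image (Sset ν' e) ∪ Finset.univ.image (S'set ν' e)

lemma hTriple_subset_newElems : hTriple ν' e ⊆ newElems ν' e := by
  intro a ha
  simp only [hTriple, Finset.mem_insert, Finset.mem_singleton] at ha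
  simp only [newElems, Finset.mem_image, Finset.mem_univ, true_and]
  rcases ha with h | h | h <;> exact ⟨_, h.symm⟩

lemma Sset_subset_newElems (i : Fin (ν' + 2)) : Sset ν' e i ⊆ newElems ν' e := by
  intro a ha
  simp only [Sset, Finset.mem_insert, Finset.mem_singleton] at ha
  simp only [newElems, Finset.mem_image, Finset.mem_univ, true_and]
  rcases ha with h | h | h <;> exact ⟨_, h.symm⟩

lemma S'set_subset_newElems (i : Fin (ν' + 2)) : S'set ν' e i ⊆ newElems ν' e := by
  intro a ha
  simp only [S'set, Finset.mem_insert, Finset.mem_singleton] at ha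
  simp only [newElems, Finset.mem_image, Finset.mem_univ, true_and]
  rcases ha with h | h | h <;> exact ⟨_, h.symm⟩

lemma card_hTriple (he : Function.Injective e) : (hTriple ν' e).card = 3 := by
  rw [hTriple, Finset.card_insert_of_notMem, Finset.card_insert_of_notMem,
    Finset.card_singleton] <;> simp [he.eq_iff]

lemma card_Sset (he : Function.Injective e) (i : Fin (ν' + 2)) : (Sset ν' e i).card = 3 := by
  rw [Sset, Finset.card_insert_of_notMem, Finset.card_insert_of_notMem,
    Finset.card_singleton] <;> simp [he.eq_iff, Prod.ext_iff]

lemma card_S'set (he : Function.Injective e) (i : Fin (ν' + 2)) : (S'set ν' e i).card = 3 := by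
  rw [S'set, Finset.card_insert_of_notMem, Finset.card_insert_of_notMem,
    Finset.card_singleton] <;> simp [he.eq_iff, Prod.ext_iff]

lemma card_newElems (he : Function.Injective e) : (newElems ν' e).card = 3 * ν' + 9 := by
  rw [newElems, Finset.card_image_of_injective _ he, Finset.card_univ]
  simp only [Fintype.card_sum, Fintype.card_prod, Fintype.card_fin]
  ring

lemma mem_bigSigma_iff (Sig0 : Finset (Finset α)) (σ : Finset α) :
    σ ∈ bigSigma ν' e Sig0 ↔
      σ ∈ Sig0 ∨ σ = hTriple ν' e ∨ (∃ i, Sset ν' e i = σ) ∨ (∃ i, S'set ν' e i = σ) := by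
  simp [bigSigma, Finset.mem_union, or_assoc]
  tauto

lemma card_of_mem_bigSigma {Γ0 : Finset α} (Sig0 : Finset (Finset α))
    (hSig0 : ∀ σ ∈ Sig0, σ ⊆ Γ0 ∧ σ.card = 3) (he : Function.Injective e)
    (σ : Finset α) (hσ : σ ∈ bigSigma ν' e Sig0) : σ.card = 3 := by
  rcases (mem_bigSigma_iff ν' e Sig0 σ).1 hσ with h | h | ⟨i, h⟩ | ⟨i, h⟩
  · exact (hSig0 σ h).2
  · rw [h]; exact card_hTriple ν' e he
  · rw [← h]; exact card_Sset ν' e he i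
  · rw [← h]; exact card_S'set ν' e he i


/-- the modified X3C instance `(Γ, Σ)` has an exact cover iff the original
instance `(Γ⁰, Σ⁰)` has one. -/
theorem statement_11 (Γ0 : Finset α) (Sig0 : Finset (Finset α))
    (hΓ0 : Γ0.card = 3 * ν')
    (hSig0 : ∀ σ ∈ Sig0, σ ⊆ Γ0 ∧ σ.card = 3)
    (he : Function.Injective e) (hfresh : ∀ q, e q ∉ Γ0) :
    HasExactCover (Γ0 ∪ newElems ν' e) (bigSigma ν' e Sig0) ↔ HasExactCover Γ0 Sig0 := by
  have hdisj : Disjoint Γ0 (newElems ν' e) := by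
    rw [Finset.disjoint_right]
    intro a ha
    simp only [newElems, Finset.mem_image, Finset.mem_univ, true_and] at ha
    obtain ⟨q, rfl⟩ := ha
    exact hfresh q
  constructor
  · rintro ⟨T, hTsub, hTcard, hTunion⟩
    set T0 := T ∩ Sig0 with hT0def
    set T1 := T \ Sig0 with hT1def
    have hT01 : T0 ∪ T1 = T := by
      ext a; simp only [hT0def, hT1def, Finset.mem_union, Finset.mem_inter, Finset.mem_sdiff]
      tauto
    have hT1sub : ∀ σ ∈ T1, σ ⊆ newElems ν' e := by
      intro σ hσ
      have hm := hTsub (Finset.mem_sdiff.1 hσ).1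
      rcases (mem_bigSigma_iff ν' e Sig0 σ).1 hm with h | h | ⟨i, h⟩ | ⟨i, h⟩
      · exact absurd h (Finset.mem_sdiff.1 hσ).2
      · rw [h]; exact hTriple_subset_newElems ν' e
      · rw [← h]; exact Sset_subset_newElems ν' e i
      · rw [← h]; exact S'set_subset_newElems ν' e i
    have hU0 : T0.biUnion id ⊆ Γ0 := by
      intro a ha
      obtain ⟨σ, hσ, haσ⟩ := Finset.mem_biUnion.1 ha
      exact (hSig0 σ (Finset.mem_inter.1 hσ).2).1 haσ
    have hU1 : T1.biUnion id ⊆ newElems ν' e := by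
      intro a ha
      obtain ⟨σ, hσ, haσ⟩ := Finset.mem_biUnion.1 ha
      exact hT1sub σ hσ haσ
    have hΓcover : Γ0 ⊆ T0.biUnion id := by
      intro a ha
      have : a ∈ T.biUnion id := hTunion ▸ Finset.mem_union_left _ ha
      obtain ⟨σ, hσT, haσ⟩ := Finset.mem_biUnion.1 this
      by_cases hσ : σ ∈ Sig0
      · exact Finset.mem_biUnion.2 ⟨σ, Finset.mem_inter.2 ⟨hσT, hσ⟩, haσ⟩
      · exact absurd ha (Finset.disjoint_right.1 hdisj
          (hT1sub σ (Finset.mem_sdiff.2 ⟨hσT, hσ⟩) haσ))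
    have hNcover : newElems ν' e ⊆ T1.biUnion id := by
      intro a ha
      have : a ∈ T.biUnion id := hTunion ▸ Finset.mem_union_right _ ha
      obtain ⟨σ, hσT, haσ⟩ := Finset.mem_biUnion.1 this
      by_cases hσ : σ ∈ Sig0
      · exact absurd ha (Finset.disjoint_left.1 hdisj ((hSig0 σ hσ).1 haσ))
      · exact Finset.mem_biUnion.2 ⟨σ, Finset.mem_sdiff.2 ⟨hσT, hσ⟩, haσ⟩
    have hU0' : T0.biUnion id = Γ0 := Finset.Subset.antisymm hU0 hΓcover
    have hU1' : T1.biUnion id = newElems ν' e := Finset.Subset.antisymm hU1 hNcover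
    have hb0 : Γ0.card ≤ T0.card * 3 := by
      rw [← hU0']
      exact Finset.card_biUnion_le_card_mul _ _ _
        (fun σ hσ => le_of_eq (hSig0 σ (Finset.mem_inter.1 hσ).2).2)
    have hb1 : (newElems ν' e).card ≤ T1.card * 3 := by
      rw [← hU1']
      exact Finset.card_biUnion_le_card_mul _ _ _
        (fun σ hσ => le_of_eq (card_of_mem_bigSigma ν' e Sig0 hSig0 he σ
          (hTsub (Finset.mem_sdiff.1 hσ).1)))
    have hsplit : T0.card + T1.card = T.card := by
      rw [← hT01, Finset.card_union_of_disjoint]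
      exact Finset.disjoint_sdiff_inter T Sig0 |>.symm
    have htot : 3 * T.card = Γ0.card + (newElems ν' e).card := by
      rw [hTcard, Finset.card_union_of_disjoint hdisj]
    have hNE := card_newElems ν' e he
    refine ⟨T0, Finset.inter_subset_right, ?_, hU0'⟩
    omega
  · rintro ⟨T0, hT0sub, hT0card, hT0union⟩
    refine ⟨T0 ∪ ({hTriple ν' e} ∪ Finset.univ.image (Sset ν' e)), ?_, ?_, ?_⟩
    · intro σ hσ
      rw [mem_bigSigma_iff]
      rcases Finset.mem_union.1 hσ with h | h
      · exact Or.inl (hT0sub h)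
      · rcases Finset.mem_union.1 h with h | h
        · exact Or.inr (Or.inl (Finset.mem_singleton.1 h))
        · obtain ⟨i, _, hi⟩ := Finset.mem_image.1 h
          exact Or.inr (Or.inr (Or.inl ⟨i, hi⟩))
    · have hdT : Disjoint T0 ({hTriple ν' e} ∪ Finset.univ.image (Sset ν' e)) := by
        rw [Finset.disjoint_left]
        intro σ hσ hσ'
        have hsubΓ : σ ⊆ Γ0 := (hSig0 σ (hT0sub hσ)).1
        have hcard : σ.card = 3 := (hSig0 σ (hT0sub hσ)).2
        have hsubN : σ ⊆ newElems ν' e := by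
          rcases Finset.mem_union.1 hσ' with h | h
          · rw [Finset.mem_singleton.1 h]; exact hTriple_subset_newElems ν' e
          · obtain ⟨i, _, hi⟩ := Finset.mem_image.1 h
            rw [← hi]; exact Sset_subset_newElems ν' e i
        have : σ = ∅ := Finset.eq_empty_of_forall_notMem
          (fun a ha => Finset.disjoint_left.1 hdisj (hsubΓ ha) (hsubN ha))
        simp [this] at hcard
      have hdh : hTriple ν' e ∉ Finset.univ.image (Sset ν' e) := by
        intro h
        obtain ⟨i, _, hi⟩ := Finset.mem_image.1 h
        have : e (Sum.inl 0) ∈ Sset ν' e i := by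
          rw [hi]; simp [hTriple]
        simp [Sset, he.eq_iff] at this
      have hSinj : Function.Injective (Sset ν' e) := by
        intro i j hij
        have : e (Sum.inr (i, 0)) ∈ Sset ν' e j := by
          rw [← hij]; simp [Sset]
        simp [Sset, he.eq_iff, Prod.ext_iff] at this
        exact this
      rw [Finset.card_union_of_disjoint hdT, Finset.card_union_of_disjoint (by simpa using hdh),
        Finset.card_singleton, Finset.card_image_of_injective _ hSinj, Finset.card_univ,
        Fintype.card_fin, Finset.card_union_of_disjoint hdisj, hΓ0, card_newElems ν' e he]
      omega
    · have hb : ∀ (s t : Finset (Finset α)), (s ∪ t).biUnion id = s.biUnion id ∪ t.biUnion id := by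
        intro s t; ext a
        simp only [Finset.mem_biUnion, Finset.mem_union, id]
        constructor
        · rintro ⟨σ, hσ | hσ, ha⟩
          · exact Or.inl ⟨σ, hσ, ha⟩
          · exact Or.inr ⟨σ, hσ, ha⟩
        · rintro (⟨σ, hσ, ha⟩ | ⟨σ, hσ, ha⟩)
          · exact ⟨σ, Or.inl hσ, ha⟩
          · exact ⟨σ, Or.inr hσ, ha⟩
      rw [hb, hT0union]
      congr 1
      apply Finset.Subset.antisymm
      · intro a ha
        obtain ⟨σ, hσ, haσ⟩ := Finset.mem_biUnion.1 ha
        rcases Finset.mem_union.1 hσ with h | h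
        · rw [Finset.mem_singleton.1 h] at haσ
          exact hTriple_subset_newElems ν' e haσ
        · obtain ⟨i, _, hi⟩ := Finset.mem_image.1 h
          rw [← hi] at haσ
          exact Sset_subset_newElems ν' e i haσ
      · intro a ha
        simp only [newElems, Finset.mem_image, Finset.mem_univ, true_and] at ha
        obtain ⟨q, rfl⟩ := ha
        rcases q with j | ⟨i, j⟩
        · refine Finset.mem_biUnion.2 ⟨hTriple ν' e, by simp, ?_⟩
          fin_cases j <;> simp [hTriple]
        · refine Finset.mem_biUnion.2 ⟨Sset ν' e i, by simp, ?_⟩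
          fin_cases j <;> simp [Sset]


end Construction

end Paper
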